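/- Let k ≥ 1 and let T, Z be disjoint subsets of {1,…,k}, with C = {1,…,k} ∖ (T ∪ Z), such that for every i ∈ T one has i ≥ 2 and i − 1 ∈ C. Let a = (a_1,…,a_k) be a k-tuple of positive integers with a_i ≡ 2 (mod 2^{⌊log₂(2i)⌋}) for i ∈ T, a_i ≡ 1 (mod 2^{⌊log₂(2i)⌋}) for i ∈ Z, and a_i ≡ 0 (mod 2^{⌊log₂(2i)⌋}) for i ∈ C. Set r = |T| + |Z| and T′ = {i − 1 : i ∈ T}. Then: (i) Φ(a, I) is even for every I ∈ {0,1}^k with ε_1 + ⋯ + ε_k < r; and (ii) Φ(a, χ_{Z ∪ T′}) is odd, where χ_{Z ∪ T′} ∈ {0,1}^k is the indicator vector of Z ∪ T′. -/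

import Mathlib

/-- `Phi k a I` is the sum `Σ_B ∏_{i=1}^k C(a_i + b_i - 2, b_i)` over all `k`-tuples
`B = (b_1,…,b_k)` of nonnegative integers such that `B + I ∈ 𝒮_k` (i.e. the sum of the
first `j` entries of `B + I` is at most `j` for each `1 ≤ j ≤ k`) and
`(b_1+ε_1) + ⋯ + (b_k+ε_k) = k`.  Sequences are 1-indexed: the `i`-th entry of `a` is
`a i` for `1 ≤ i ≤ k`.  The top entry `a_i + b_i - 2` uses truncated subtraction. -/
def Phi (k : ℕ) (a I : ℕ → ℕ) : ℕ :=
  ∑ B ∈ (Fintype.piFinset fun _ : Fin k => Finset.range (k + 1)) |>.filter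
      (fun B =>
        (∀ j : Fin k,
          (∑ i ∈ Finset.univ.filter (fun i : Fin k => i ≤ j), (B i + I (i.1 + 1)))
            ≤ j.1 + 1) ∧
        (∑ i : Fin k, (B i + I (i.1 + 1))) = k),
    ∏ i : Fin k, Nat.choose (a (i.1 + 1) + B i - 2) (B i)


namespace Paper


inductive Slot where
  | Z (e : ℕ) | C (e : ℕ) | T (e : ℕ)
deriving DecidableEq

open Slot

def N : List Slot → ℕ → ℕ
  | [], s => if s = 0 then 1 else 0
  | Z e :: L, s => if e ≤ s + 1 then N L (s + 1 - e) else 0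
  | C e :: L, s => (if e ≤ s + 1 then N L (s + 1 - e) else 0) + (if e ≤ s then N L (s - e) else 0)
  | T f :: L, s => ∑ c ∈ Finset.Icc f (s + 1), N L (s + 1 - c)

def epsSum : List Slot → ℕ
  | [] => 0
  | Z e :: L => e + epsSum L
  | C e :: L => e + epsSum L
  | T e :: L => e + epsSum L

def rk : List Slot → ℕ
  | [] => 0
  | Z _ :: L => 1 + rk L
  | C _ :: L => rk L
  | T _ :: L => 1 + rk L

inductive Good : List Slot → Prop
  | nil : Good []
  | z (e) {L} : Good L → Good (Z e :: L)
  | c (e) {L} : Good L → Good (C e :: L)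
  | ct (e f) {L} : Good L → Good (C e :: T f :: L)

inductive Spec : List Slot → Prop
  | nil : Spec []
  | z {L} : Spec L → Spec (Z 1 :: L)
  | c {L} : Spec L → Spec (C 0 :: L)
  | ct {L} : Spec L → Spec (C 1 :: T 0 :: L)

lemma z2 (a : ZMod 2) : a + a = 0 := by revert a; decide

lemma tsum (L : List Slot) (f s : ℕ) :
    N (T f :: L) s = if f ≤ s + 1 then ∑ t ∈ Finset.range (s + 2 - f), N L t else 0 := by
  rw [N]
  rcases le_or_gt f (s+1) with h | h
  · rw [if_pos h]
    rw [show Finset.Icc f (s+1) = Finset.Ico f (s+2) by rw [← Finset.Ico_add_one_right_eq_Icc]; rfl]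
    rw [Finset.sum_Ico_eq_sum_range]
    rw [← Finset.sum_range_reflect]
    apply Finset.sum_congr rfl
    intro j hj
    simp only [Finset.mem_range] at hj
    congr 1
    omega
  · rw [if_neg (by omega)]
    rw [Finset.Icc_eq_empty (by omega), Finset.sum_empty]

lemma key_gt (L : List Slot) (e f s : ℕ) (h : s + 2 ≤ e) : N (C e :: T f :: L) s = 0 := by
  rw [N, if_neg (by omega), if_neg (by omega)]

lemma key_eq (L : List Slot) (f s : ℕ) :
    (N (C (s+1) :: T f :: L) s : ZMod 2) =
      (if f ≤ 1 then (N L (1 - f) : ZMod 2) else 0) + (if f = 0 then (N L 0 : ZMod 2) else 0) := by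
  rw [N, if_pos (le_refl (s+1)), if_neg (by omega), Nat.sub_self (s+1), add_zero, tsum]
  rcases f with _ | _ | f
  · rw [if_pos (by omega), if_pos rfl, if_pos (by omega)]
    rw [show 2 - 0 = 2 from rfl, Finset.sum_range_succ, Finset.sum_range_one]
    push_cast
    ring
  · rw [if_pos (by omega), if_pos (by omega), if_neg (by omega)]
    rw [show 1 + 1 - 1 = 1 from rfl, Finset.sum_range_one]
    push_cast
    ring
  · rw [if_neg (by omega), if_neg (by omega), if_neg (by omega)]
    push_cast
    ring

lemma key_lt (L : List Slot) (e f s : ℕ) (h : e ≤ s) :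
    (N (C e :: T f :: L) s : ZMod 2) =
      if f ≤ s + 2 - e then (N L (s + 2 - e - f) : ZMod 2) else 0 := by
  rw [N, if_pos (by omega : e ≤ s + 1), if_pos h, tsum, tsum]
  rcases le_or_gt f (s + 1 - e) with h1 | h1
  · rw [if_pos (by omega), if_pos (by omega), if_pos (by omega)]
    rw [show s + 1 - e + 2 - f = (s + 2 - e - f) + 1 by omega,
        show s - e + 2 - f = s + 2 - e - f by omega, Finset.sum_range_succ]
    push_cast
    rw [add_right_comm, z2, zero_add]
  · rcases le_or_gt f (s + 2 - e) with h2 | h2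
    · rw [if_pos (by omega), if_neg (by omega), if_pos (by omega)]
      rw [show s + 1 - e + 2 - f = 1 by omega, show s + 2 - e - f = 0 by omega,
          Finset.sum_range_one]
      push_cast
      ring
    · rw [if_neg (by omega), if_neg (by omega), if_neg (by omega)]
      push_cast
      ring

lemma evenN {L : List Slot} (hL : Good L) : ∀ s, epsSum L < s + rk L → (N L s : ZMod 2) = 0 := by
  induction hL with
  | nil =>
    intro s hs
    rw [N, if_neg (by simp [epsSum, rk] at hs; omega)]
    simp
  | z e hG ih =>
    intro s hs
    simp only [epsSum, rk] at hs
    rw [N]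
    split_ifs with h
    · exact ih _ (by omega)
    · simp
  | c e hG ih =>
    intro s hs
    simp only [epsSum, rk] at hs
    rw [N]
    rcases le_or_gt e (s+1) with h | h
    · rw [if_pos h]
      rcases le_or_gt e s with h2 | h2
      · rw [if_pos h2]
        push_cast
        rw [ih _ (by omega), ih _ (by omega)]
        ring
      · rw [if_neg (by omega)]
        push_cast
        rw [ih _ (by omega)]
        ring
    · rw [if_neg (by omega), if_neg (by omega)]
      push_cast
      ring
  | ct e f hG ih =>
    intro s hs
    simp only [epsSum, rk] at hs
    rcases lt_or_ge (s+1) e with h | h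
    · rw [key_gt _ e f s (by omega)]
      push_cast
      ring
    rcases eq_or_lt_of_le h with rfl | h2
    · rw [key_eq]
      rcases le_or_gt f 1 with hf | hf
      · rw [if_pos hf, ih _ (by omega)]
        rcases Nat.eq_zero_or_pos f with rfl | hf0
        · rw [if_pos rfl, ih _ (by omega)]
          ring
        · rw [if_neg (by omega)]
          ring
      · rw [if_neg (by omega), if_neg (by omega)]
        ring
    · rw [key_lt _ e f s (by omega)]
      split_ifs with hf
      · exact ih _ (by omega)
      · rfl

lemma oddN {L : List Slot} (hL : Spec L) : ∀ s, (N L s : ZMod 2) = if s = 0 then 1 else 0 := by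
  induction hL with
  | nil =>
    intro s
    rw [N]
    split_ifs <;> simp
  | z hG ih =>
    intro s
    rw [N, if_pos (by omega), show s + 1 - 1 = s by omega, ih]
  | c hG ih =>
    intro s
    rw [N, if_pos (by omega), if_pos (by omega), show s + 1 - 0 = s + 1 by omega,
       show s - 0 = s by omega]
    push_cast
    rw [ih, ih, if_neg (by omega), zero_add]
  | ct hG ih =>
    intro s
    rcases Nat.eq_zero_or_pos s with rfl | hs
    · rw [show (1 : ℕ) = 0 + 1 from rfl, key_eq, if_pos (by omega), if_pos rfl, ih, ih]
      norm_num
    · rw [key_lt _ 1 0 s (by omega), if_pos (by omega), ih]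
      rw [if_neg (by omega), if_neg (by omega)]



lemma lucas2 (n k : ℕ) :
    n.choose k % 2 = ((n % 2).choose (k % 2) * ((n / 2).choose (k / 2))) % 2 := by
  have : Fact (Nat.Prime 2) := ⟨Nat.prime_two⟩
  exact Choose.choose_modEq_choose_mod_mul_choose_div_nat

lemma half_mod (m m' l : ℕ) (h : m % 2 ^ (l + 1) = m' % 2 ^ (l + 1)) :
    m / 2 % 2 ^ l = m' / 2 % 2 ^ l := by
  have h1 : m % (2 * 2 ^ l) / 2 = m / 2 % 2 ^ l := Nat.mod_mul_right_div_self m 2 (2 ^ l)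
  have h2 : m' % (2 * 2 ^ l) / 2 = m' / 2 % 2 ^ l := Nat.mod_mul_right_div_self m' 2 (2 ^ l)
  rw [pow_succ, mul_comm] at h
  omega

lemma choose_parity_congr : ∀ (l m m' b : ℕ), m % 2 ^ l = m' % 2 ^ l → b < 2 ^ l →
    (m + b).choose b % 2 = (m' + b).choose b % 2 := by
  intro l
  induction l with
  | zero =>
    intro m m' b h hb
    have : b = 0 := by simpa using Nat.lt_one_iff.mp (by simpa using hb)
    subst this
    simp
  | succ l ih =>
    intro m m' b h hb
    have hm2 : m % 2 = m' % 2 := by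
      have d : (2 : ℕ) ∣ 2 ^ (l + 1) := dvd_pow_self 2 (Nat.succ_ne_zero l)
      rw [← Nat.mod_mod_of_dvd m d, ← Nat.mod_mod_of_dvd m' d, h]
    have hhalf : m / 2 % 2 ^ l = m' / 2 % 2 ^ l := half_mod m m' l h
    have hb2 : b / 2 < 2 ^ l := by
      rw [pow_succ] at hb; omega
    rw [lucas2 (m + b) b, lucas2 (m' + b) b]
    rcases Nat.mod_two_eq_zero_or_one m with h1 | h1 <;>
      rcases Nat.mod_two_eq_zero_or_one b with h2 | h2
    · rw [show (m + b) % 2 = 0 by omega, show (m' + b) % 2 = 0 by omega,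
        show (m + b) / 2 = m / 2 + b / 2 by omega, show (m' + b) / 2 = m' / 2 + b / 2 by omega,
        h2]
      simp only [Nat.choose_self, Nat.choose_zero_right, one_mul]
      exact ih _ _ _ hhalf hb2
    · rw [show (m + b) % 2 = 1 by omega, show (m' + b) % 2 = 1 by omega,
        show (m + b) / 2 = m / 2 + b / 2 by omega, show (m' + b) / 2 = m' / 2 + b / 2 by omega,
        h2]
      simp only [Nat.choose_self, Nat.choose_zero_right, one_mul, Nat.choose_one_right]
      exact ih _ _ _ hhalf hb2
    · rw [show (m + b) % 2 = 1 by omega, show (m' + b) % 2 = 1 by omega,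
        show (m + b) / 2 = m / 2 + b / 2 by omega, show (m' + b) / 2 = m' / 2 + b / 2 by omega,
        h2]
      simp only [Nat.choose_zero_right, one_mul]
      exact ih _ _ _ hhalf hb2
    · rw [show (m + b) % 2 = 0 by omega, show (m' + b) % 2 = 0 by omega, h2]
      simp [Nat.choose_eq_zero_of_lt]

lemma zweight_even : ∀ (l b : ℕ), 1 ≤ b → b < 2 ^ l → (2 ^ l - 1 + b).choose b % 2 = 0 := by
  intro l
  induction l with
  | zero => intro b h1 h2; omega
  | succ l ih =>
    intro b h1 h2
    have hp : (2:ℕ) ^ (l + 1) = 2 * 2 ^ l := by rw [pow_succ]; ring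
    have hpl : (1:ℕ) ≤ 2 ^ l := Nat.one_le_two_pow
    rw [lucas2]
    rcases Nat.mod_two_eq_zero_or_one b with h2' | h2'
    · rw [show (2 ^ (l+1) - 1 + b) % 2 = 1 by omega, show b % 2 = 0 by omega,
        show (2 ^ (l+1) - 1 + b) / 2 = 2 ^ l - 1 + b / 2 by omega]
      simp only [Nat.choose_zero_right, one_mul]
      exact ih (b / 2) (by omega) (by omega)
    · rw [show (2 ^ (l+1) - 1 + b) % 2 = 0 by omega, show b % 2 = 1 by omega]
      simp
  
lemma cweight_even (l b : ℕ) (h1 : 2 ≤ b) (h2 : b < 2 ^ l) :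
    (2 ^ l - 2 + b).choose b % 2 = 0 := by
  rcases l with _ | l
  · omega
  have hp : (2:ℕ) ^ (l + 1) = 2 * 2 ^ l := by rw [pow_succ]; ring
  have hpl : (1:ℕ) ≤ 2 ^ l := Nat.one_le_two_pow
  rw [lucas2]
  rw [show (2 ^ (l+1) - 2 + b) % 2 = b % 2 by omega,
      show (2 ^ (l+1) - 2 + b) / 2 = 2 ^ l - 1 + b / 2 by omega]
  rcases Nat.mod_two_eq_zero_or_one b with h3 | h3 <;> rw [h3]
  · simp only [Nat.choose_zero_right, one_mul]
    rw [zweight_even l (b/2) (by omega) (by omega)]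
  · simp only [Nat.choose_self, one_mul]
    rw [zweight_even l (b/2) (by omega) (by omega)]

section W
variable {a i : ℕ}

lemma ilt : 1 ≤ i → i < 2 ^ Nat.log 2 (2 * i) := by
  intro hi
  have h := Nat.lt_pow_succ_log_self (by norm_num : 1 < 2) (2 * i)
  rw [pow_succ] at h
  omega

lemma lge1 (hi : 1 ≤ i) : 1 ≤ Nat.log 2 (2 * i) :=
  Nat.log_pos (by norm_num) (by omega)

lemma lge2 (hi : 2 ≤ i) : 2 ≤ Nat.log 2 (2 * i) := by
  rw [Nat.le_log_iff_pow_le (by norm_num) (by omega)]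
  omega

lemma odd_weight_T (hi : 2 ≤ i) (ha : a ≡ 2 [MOD 2 ^ Nat.log 2 (2 * i)]) (b : ℕ) (hb : b ≤ i) :
    (a + b - 2).choose b % 2 = 1 := by
  set l := Nat.log 2 (2 * i) with hl
  set P := 2 ^ l with hP
  have hP4 : 4 ≤ P := by
    have : (2:ℕ) ^ 2 ≤ 2 ^ l := Nat.pow_le_pow_right (by norm_num) (lge2 hi)
    simpa using this
  have haP : a % P = 2 := by
    have : (2:ℕ) % P = 2 := Nat.mod_eq_of_lt (by omega)
    rw [Nat.ModEq] at ha
    omega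
  have ha2 : 2 ≤ a := by
    rcases Nat.lt_or_ge a 2 with h | h
    · rw [Nat.mod_eq_of_lt (by omega)] at haP; omega
    · exact h
  have hm : (a - 2) % P = 0 := by
    have hd := Nat.div_add_mod a P
    rw [haP] at hd
    have : a - 2 = P * (a / P) := by omega
    rw [this]
    exact Nat.mul_mod_right P _
  have : a + b - 2 = (a - 2) + b := by omega
  rw [this, choose_parity_congr l (a - 2) 0 b (by simpa using hm) (lt_of_le_of_lt hb (ilt (by omega)))]
  simp [Nat.choose_self]

lemma odd_weight_Z (hi : 1 ≤ i) (ha : a ≡ 1 [MOD 2 ^ Nat.log 2 (2 * i)]) (hapos : 0 < a)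
    (b : ℕ) (hb : b ≤ i) :
    (a + b - 2).choose b % 2 = if b = 0 then 1 else 0 := by
  set l := Nat.log 2 (2 * i) with hl
  set P := 2 ^ l with hP
  have hP2 : 2 ≤ P := by
    have : (2:ℕ) ^ 1 ≤ 2 ^ l := Nat.pow_le_pow_right (by norm_num) (lge1 hi)
    simpa using this
  have hbP : b < P := lt_of_le_of_lt hb (ilt hi)
  rcases Nat.lt_or_ge a 2 with h1 | h1
  · have ha1 : a = 1 := by omega
    subst ha1
    rcases Nat.eq_zero_or_pos b with rfl | hb0
    · simp
    · rw [if_neg (by omega), show 1 + b - 2 = b - 1 by omega,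
        Nat.choose_eq_zero_of_lt (by omega)]
  · have haP : a % P = 1 := by
      have : (1:ℕ) % P = 1 := Nat.mod_eq_of_lt (by omega)
      rw [Nat.ModEq] at ha
      omega
    have hq : 1 ≤ a / P := by
      rcases Nat.eq_zero_or_pos (a / P) with h0 | h0
      · have hd := Nat.div_add_mod a P
        rw [h0, Nat.mul_zero] at hd
        omega
      · omega
    have hm : (a - 2) % P = P - 1 := by
      have hd := Nat.div_add_mod a P
      have : a - 2 = P * (a / P - 1) + (P - 1) := by
        have h5 : P * (a / P) = P * (a / P - 1) + P := by
          rcases Nat.exists_eq_add_of_le hq with ⟨c, hc⟩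
          rw [hc, show 1 + c - 1 = c by omega, Nat.mul_add, Nat.mul_one, Nat.add_comm]
        omega
      rw [this, Nat.mul_add_mod, Nat.mod_eq_of_lt (by omega)]
    rcases Nat.eq_zero_or_pos b with rfl | hb0
    · simp
    · rw [if_neg (by omega), show a + b - 2 = (a - 2) + b by omega,
        choose_parity_congr l (a - 2) (P - 1) b (by rw [hm, Nat.mod_eq_of_lt (by omega)]) hbP,
        zweight_even l b hb0 hbP]

lemma odd_weight_C (hi : 1 ≤ i) (ha : a ≡ 0 [MOD 2 ^ Nat.log 2 (2 * i)]) (hapos : 0 < a)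
    (b : ℕ) (hb : b ≤ i) :
    (a + b - 2).choose b % 2 = if b ≤ 1 then 1 else 0 := by
  set l := Nat.log 2 (2 * i) with hl
  set P := 2 ^ l with hP
  have hP2 : 2 ≤ P := by
    have : (2:ℕ) ^ 1 ≤ 2 ^ l := Nat.pow_le_pow_right (by norm_num) (lge1 hi)
    simpa using this
  have hbP : b < P := lt_of_le_of_lt hb (ilt hi)
  have haP : a % P = 0 := by
    rw [Nat.ModEq] at ha
    simpa using ha
  have haP2 : P ≤ a := Nat.le_of_dvd hapos (Nat.dvd_of_mod_eq_zero haP)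
  have hq : 1 ≤ a / P := Nat.one_le_div_iff (by omega) |>.mpr haP2
  have hPe : 2 ∣ P := hP ▸ dvd_pow_self 2 (by have := lge1 hi; omega)
  have hae : 2 ∣ a := by
    have : P ∣ a := Nat.dvd_of_mod_eq_zero haP
    exact dvd_trans hPe this
  have hm : (a - 2) % P = P - 2 := by
    have hd := Nat.div_add_mod a P
    have : a - 2 = P * (a / P - 1) + (P - 2) := by
      have h5 : P * (a / P) = P * (a / P - 1) + P := by
        rcases Nat.exists_eq_add_of_le hq with ⟨c, hc⟩
        rw [hc, show 1 + c - 1 = c by omega, Nat.mul_add, Nat.mul_one, Nat.add_comm]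
      omega
    rw [this, Nat.mul_add_mod, Nat.mod_eq_of_lt (by omega)]
  rcases Nat.eq_zero_or_pos b with rfl | hb0
  · simp
  rcases Nat.lt_or_ge b 2 with hb1 | hb1
  · have : b = 1 := by omega
    subst this
    rw [if_pos le_rfl, show a + 1 - 2 = a - 1 by omega, Nat.choose_one_right]
    omega
  · rw [if_neg (by omega), show a + b - 2 = (a - 2) + b by omega,
      choose_parity_congr l (a - 2) (P - 2) b (by rw [hm, Nat.mod_eq_of_lt (by omega)]) hbP,
      cweight_even l b hb1 hbP]

end W
def allow : Slot → ℕ → Prop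
  | Z e, c => c = e
  | C e, c => e ≤ c ∧ c ≤ e + 1
  | T e, c => e ≤ c

instance : ∀ sl c, Decidable (allow sl c) := by
  intro sl c
  cases sl <;> simp only [allow] <;> infer_instance

def G : List (ℕ → ℕ) → ℕ → ℕ
  | [], s => if s = 0 then 1 else 0
  | g :: w, s => ∑ x ∈ Finset.range (s + 2), g x * G w (s + 1 - x)

def Matches : List (ℕ → ℕ) → List Slot → ℕ → Prop
  | [], [], _ => True
  | g :: w, sl :: L, bd => (∀ c ≤ bd, (g c % 2 = 1 ↔ allow sl c)) ∧ Matches w L (bd + 1)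
  | _, _, _ => False

lemma cast_indicator (g : ℕ → ℕ) (sl : Slot) (c : ℕ) (h : g c % 2 = 1 ↔ allow sl c) :
    ((g c : ZMod 2)) = if allow sl c then 1 else 0 := by
  have h2 : ((g c : ZMod 2)) = ((g c % 2 : ℕ) : ZMod 2) := (ZMod.natCast_mod _ _).symm
  rcases Nat.mod_two_eq_zero_or_one (g c) with h0 | h0 <;> rw [h2, h0]
  · rw [if_neg (by rw [← h]; omega)]
    simp
  · rw [if_pos (h.mp h0)]
    simp

lemma G_parity : ∀ (w : List (ℕ → ℕ)) (L : List Slot) (bd s : ℕ), Matches w L bd →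
    s + 1 ≤ bd → (G w s : ZMod 2) = (N L s : ZMod 2) := by
  intro w
  induction w with
  | nil =>
    intro L bd s hm hs
    cases L with
    | nil => rfl
    | cons sl L => exact absurd hm (by simp [Matches])
  | cons g w ih =>
    intro L bd s hm hs
    cases L with
    | nil => exact absurd hm (by simp [Matches])
    | cons sl L =>
      obtain ⟨h1, h2⟩ := hm
      rw [G]
      push_cast
      have hterm : ∀ x ∈ Finset.range (s + 2),
          (g x : ZMod 2) * (G w (s + 1 - x) : ZMod 2)
          = (if allow sl x then 1 else 0) * (N L (s + 1 - x) : ZMod 2) := by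
        intro x hx
        simp only [Finset.mem_range] at hx
        rw [cast_indicator g sl x (h1 x (by omega)), ih L (bd + 1) (s + 1 - x) h2 (by omega)]
      rw [Finset.sum_congr rfl hterm]
      cases sl with
      | Z e =>
        rw [N]
        have : ∀ x ∈ Finset.range (s + 2),
            (if allow (Z e) x then 1 else 0) * (N L (s + 1 - x) : ZMod 2)
            = if x = e then (N L (s + 1 - x) : ZMod 2) else 0 := by
          intro x hx
          by_cases hx' : allow (Z e) x
          · rw [if_pos hx']
            simp only [allow] at hx'
            simp [hx']
          · rw [if_neg hx']
            simp only [allow] at hx'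
            simp [hx']
        rw [Finset.sum_congr rfl this, Finset.sum_ite_eq' (Finset.range (s+2)) e
          (fun x => (N L (s + 1 - x) : ZMod 2))]
        simp only [Finset.mem_range]
        split_ifs with h h' h' <;> first | rfl | omega | (exfalso; omega) | push_cast [h'] ; ring
      | C e =>
        rw [N]
        have : ∀ x ∈ Finset.range (s + 2),
            (if allow (C e) x then 1 else 0) * (N L (s + 1 - x) : ZMod 2)
            = (if x = e then (N L (s + 1 - x) : ZMod 2) else 0)
              + (if x = e + 1 then (N L (s + 1 - x) : ZMod 2) else 0) := by
          intro x hx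
          by_cases hx' : allow (C e) x
          · rw [if_pos hx']
            simp only [allow] at hx'
            split_ifs <;> first | (exfalso; omega) | simp
          · rw [if_neg hx']
            simp only [allow] at hx'
            split_ifs <;> first | (exfalso; omega) | simp
        rw [Finset.sum_congr rfl this, Finset.sum_add_distrib,
          Finset.sum_ite_eq' (Finset.range (s+2)) e (fun x => (N L (s + 1 - x) : ZMod 2)),
          Finset.sum_ite_eq' (Finset.range (s+2)) (e+1) (fun x => (N L (s + 1 - x) : ZMod 2))]
        simp only [Finset.mem_range]
        push_cast
        congr 1
        · split_ifs with h h' h' <;> first | rfl | omega | (exfalso; omega)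
        · split_ifs with h h' h' <;>
            first | rfl | omega | (exfalso; omega) | (rw [show s + 1 - (e+1) = s - e by omega])
      | T f =>
        rw [N]
        have : ∀ x ∈ Finset.range (s + 2),
            (if allow (T f) x then 1 else 0) * (N L (s + 1 - x) : ZMod 2)
            = if f ≤ x then (N L (s + 1 - x) : ZMod 2) else 0 := by
          intro x hx
          by_cases hx' : allow (T f) x
          · rw [if_pos hx']
            simp only [allow] at hx'
            simp [hx']
          · rw [if_neg hx']
            simp only [allow] at hx'
            simp [hx']
        rw [Finset.sum_congr rfl this, ← Finset.sum_filter]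
        have hset : (Finset.range (s+2)).filter (fun x => f ≤ x) = Finset.Icc f (s + 1) := by
          ext x
          simp only [Finset.mem_filter, Finset.mem_range, Finset.mem_Icc]
          omega
        rw [hset]
        push_cast
        rfl




def cond (k s : ℕ) (B : Fin k → ℕ) : Prop :=
  (∀ j : Fin k, (∑ i ∈ Finset.univ.filter (fun i : Fin k => i ≤ j), B i) ≤ s + j.1 + 1) ∧
    (∑ i : Fin k, B i) = s + k

instance (k s : ℕ) : DecidablePred (cond k s) := fun _ => by unfold cond; infer_instance

def FS (k M s : ℕ) (w : Fin k → ℕ → ℕ) : ℕ :=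
  ∑ B ∈ (Fintype.piFinset fun _ : Fin k => Finset.range M).filter (cond k s),
    ∏ i, w i (B i)

lemma mem_cond_le {k s : ℕ} {B : Fin k → ℕ} (h : cond k s B) (i : Fin k) : B i ≤ s + k := by
  rw [← h.2]
  exact Finset.single_le_sum (fun _ _ => Nat.zero_le _) (Finset.mem_univ i)

lemma FS_irrel (k M M' s : ℕ) (w : Fin k → ℕ → ℕ) (h : s + k < M) (h' : s + k < M') :
    FS k M s w = FS k M' s w := by
  unfold FS
  apply Finset.sum_congr _ (fun _ _ => rfl)
  ext B
  simp only [Finset.mem_filter, Fintype.mem_piFinset, Finset.mem_range]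
  constructor
  · rintro ⟨hB, hc⟩
    exact ⟨fun i => lt_of_le_of_lt (mem_cond_le hc i) h', hc⟩
  · rintro ⟨hB, hc⟩
    exact ⟨fun i => lt_of_le_of_lt (mem_cond_le hc i) h, hc⟩

lemma sum_piFinset_cons {M k : ℕ} (F : (Fin (k+1) → ℕ) → ℕ) :
    ∑ B ∈ Fintype.piFinset (fun _ : Fin (k+1) => Finset.range M), F B
    = ∑ x ∈ Finset.range M, ∑ b ∈ Fintype.piFinset (fun _ : Fin k => Finset.range M),
        F (Fin.cons x b) := by
  rw [← Finset.sum_product']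
  apply Finset.sum_nbij' (i := fun B => ((B 0, Fin.tail B) :
      ℕ × (Fin k → ℕ))) (j := fun p => Fin.cons p.1 p.2)
  · intro B hB
    simp only [Fintype.mem_piFinset, Finset.mem_range] at hB
    simp only [Finset.mem_product, Finset.mem_range, Fintype.mem_piFinset]
    exact ⟨hB 0, fun i => hB i.succ⟩
  · intro p hp
    simp only [Finset.mem_product, Finset.mem_range, Fintype.mem_piFinset] at hp
    simp only [Fintype.mem_piFinset, Finset.mem_range]
    intro i
    refine Fin.cases ?_ ?_ i
    · simpa using hp.1
    · intro j
      simpa using hp.2 j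
  · intro B hB
    exact Fin.cons_self_tail B
  · intro p hp
    simp
  · intro B hB
    rw [show ((B 0, Fin.tail B) : ℕ × (Fin k → ℕ)).2 = Fin.tail B from rfl,
        show ((B 0, Fin.tail B) : ℕ × (Fin k → ℕ)).1 = B 0 from rfl, Fin.cons_self_tail]

lemma cond_cons (k s x : ℕ) (b : Fin k → ℕ) :
    cond (k+1) s (Fin.cons x b) ↔ (x ≤ s + 1 ∧ cond k (s + 1 - x) b) := by
  have hsum0 : (∑ i ∈ Finset.univ.filter (fun i : Fin (k+1) => i ≤ (0 : Fin (k+1))),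
      (Fin.cons x b : Fin (k+1) → ℕ) i) = x := by
    rw [Finset.sum_filter, Fin.sum_univ_succ]
    simp [Fin.le_zero_iff, Fin.succ_ne_zero]
  have hsumS : ∀ j : Fin k, (∑ i ∈ Finset.univ.filter (fun i : Fin (k+1) => i ≤ j.succ),
      (Fin.cons x b : Fin (k+1) → ℕ) i) = x + ∑ i ∈ Finset.univ.filter (fun i : Fin k => i ≤ j), b i := by
    intro j
    rw [Finset.sum_filter, Fin.sum_univ_succ, Finset.sum_filter]
    simp [Fin.succ_le_succ_iff, Fin.zero_le]
  have htot : (∑ i : Fin (k+1), (Fin.cons x b : Fin (k+1) → ℕ) i) = x + ∑ i : Fin k, b i := by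
    rw [Fin.sum_univ_succ]
    simp
  constructor
  · rintro ⟨h1, h2⟩
    have hx : x ≤ s + 1 := by
      have := h1 0
      rw [hsum0] at this
      simpa using this
    refine ⟨hx, ⟨?_, ?_⟩⟩
    · intro j
      have := h1 j.succ
      rw [hsumS j] at this
      have hj : (j.succ : Fin (k+1)).1 = j.1 + 1 := rfl
      omega
    · rw [htot] at h2
      omega
  · rintro ⟨hx, h1, h2⟩
    constructor
    · intro j
      refine Fin.cases ?_ ?_ j
      · rw [hsum0]; omega
      · intro j'
        rw [hsumS j']
        have := h1 j'
        have hj : (j'.succ : Fin (k+1)).1 = j'.1 + 1 := rfl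
        omega
    · rw [htot]
      omega

lemma FS_succ (k M s : ℕ) (w : Fin (k+1) → ℕ → ℕ) (h : s + k + 1 < M) :
    FS (k+1) M s w = ∑ x ∈ Finset.range (s+2), w 0 x * FS k M (s+1-x) (fun i => w i.succ) := by
  unfold FS
  rw [Finset.sum_filter, sum_piFinset_cons]
  have hterm : ∀ x ∈ Finset.range M,
      (∑ b ∈ Fintype.piFinset (fun _ : Fin k => Finset.range M),
        if cond (k+1) s (Fin.cons x b) then ∏ i, w i ((Fin.cons x b : Fin (k+1) → ℕ) i) else 0)
      = if x ≤ s + 1 then w 0 x *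
          ∑ b ∈ (Fintype.piFinset (fun _ : Fin k => Finset.range M)).filter (cond k (s+1-x)),
            ∏ i, w i.succ (b i) else 0 := by
    intro x hx
    split_ifs with hxs
    · rw [Finset.mul_sum, Finset.sum_filter]
      apply Finset.sum_congr rfl
      intro b hb
      have hcc : cond (k+1) s (Fin.cons x b) ↔ cond k (s+1-x) b := by
        rw [cond_cons]
        tauto
      by_cases hc : cond k (s+1-x) b
      · rw [if_pos (hcc.mpr hc), if_pos hc, Fin.prod_univ_succ]
        simp
      · rw [if_neg (fun hh => hc (hcc.mp hh)), if_neg hc]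
    · apply Finset.sum_eq_zero
      intro b hb
      rw [if_neg (fun hh => hxs ((cond_cons k s x b).mp hh).1)]
  rw [Finset.sum_congr rfl hterm]
  rw [← Finset.sum_subset (Finset.range_subset_range.mpr (by omega : s + 2 ≤ M))]
  · apply Finset.sum_congr rfl
    intro x hx
    simp only [Finset.mem_range] at hx
    rw [if_pos (by omega)]
  · intro x hx hx2
    simp only [Finset.mem_range] at hx hx2
    rw [if_neg (by omega)]

lemma FS_eq_G : ∀ (k M s : ℕ) (w : Fin k → ℕ → ℕ), s + k < M →
    FS k M s w = G (List.ofFn w) s := by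
  intro k
  induction k with
  | zero =>
    intro M s w h
    rw [List.ofFn_zero, G]
    unfold FS
    rw [Finset.sum_filter]
    have hsingle : (Fintype.piFinset fun _ : Fin 0 => Finset.range M) = {(default : Fin 0 → ℕ)} := by
      apply Finset.eq_singleton_iff_unique_mem.mpr
      constructor
      · simp only [Fintype.mem_piFinset]
        intro i
        exact i.elim0
      · intro B hB
        exact Subsingleton.elim _ _
    rw [hsingle, Finset.sum_singleton]
    have hcond : cond 0 s (default : Fin 0 → ℕ) ↔ s = 0 := by
      unfold cond
      simp [eq_comm]
    by_cases hs : s = 0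
    · rw [if_pos (hcond.mpr hs), if_pos hs]
      simp
    · rw [if_neg (fun hc => hs (hcond.mp hc)), if_neg hs]
  | succ k ih =>
    intro M s w h
    rw [FS_succ k M s w (by omega), List.ofFn_succ, G]
    apply Finset.sum_congr rfl
    intro x hx
    simp only [Finset.mem_range] at hx
    rw [ih M (s+1-x) (fun i => w i.succ) (by omega)]

section Trans

variable (T Z : Finset ℕ) (I : ℕ → ℕ)

def slotOf (i : ℕ) : Slot :=
  if i ∈ T then Slot.T (I i) else if i ∈ Z then Slot.Z (I i) else Slot.C (I i)

def mkFrom : ℕ → ℕ → List Slot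
  | _, 0 => []
  | p, n + 1 => slotOf T Z I p :: mkFrom (p + 1) n

lemma epsSum_slot (p : ℕ) (L : List Slot) :
    epsSum (slotOf T Z I p :: L) = I p + epsSum L := by
  unfold slotOf
  split_ifs <;> rfl

lemma rk_slot (p : ℕ) (L : List Slot) :
    rk (slotOf T Z I p :: L) = (if p ∈ T ∨ p ∈ Z then 1 else 0) + rk L := by
  unfold slotOf
  by_cases h1 : p ∈ T
  · rw [if_pos h1, if_pos (Or.inl h1), rk]
  · by_cases h2 : p ∈ Z
    · rw [if_neg h1, if_pos h2, if_pos (Or.inr h2), rk]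
    · rw [if_neg h1, if_neg h2, if_neg (by tauto), rk, Nat.zero_add]

lemma epsSum_mkFrom : ∀ (n p : ℕ), epsSum (mkFrom T Z I p n) = ∑ i ∈ Finset.Ico p (p + n), I i := by
  intro n
  induction n with
  | zero => intro p; simp [mkFrom, epsSum]
  | succ n ih =>
    intro p
    rw [mkFrom, epsSum_slot, ih (p+1), show p + (n+1) = p + 1 + n by omega,
      Finset.sum_eq_sum_Ico_succ_bot (by omega : p < p + 1 + n)]

lemma rk_mkFrom : ∀ (n p : ℕ),
    rk (mkFrom T Z I p n) = ∑ i ∈ Finset.Ico p (p + n), (if i ∈ T ∨ i ∈ Z then 1 else 0) := by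
  intro n
  induction n with
  | zero => intro p; simp [mkFrom, rk]
  | succ n ih =>
    intro p
    rw [mkFrom, rk_slot, ih (p+1), show p + (n+1) = p + 1 + n by omega,
      Finset.sum_eq_sum_Ico_succ_bot (by omega : p < p + 1 + n)]

lemma good_mkFrom (hT : ∀ i ∈ T, i - 1 ∉ T ∧ i - 1 ∉ Z) :
    ∀ (n p : ℕ), p ∉ T → Good (mkFrom T Z I p n) := by
  intro n
  induction n using Nat.strong_induction_on with
  | _ n ih =>
    intro p hp
    match n with
    | 0 => exact Good.nil
    | 1 =>
      rw [mkFrom, mkFrom]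
      unfold slotOf
      rw [if_neg hp]
      split_ifs with h
      · exact Good.z _ Good.nil
      · exact Good.c _ Good.nil
    | (m + 2) =>
      by_cases hp1 : (p + 1) ∈ T
      · have hpc := hT (p+1) hp1
        simp only [Nat.add_sub_cancel] at hpc
        rw [mkFrom, mkFrom]
        unfold slotOf
        rw [if_neg hp, if_neg hpc.2, if_pos hp1]
        refine Good.ct _ _ (ih m (by omega) (p+2) ?_)
        intro hc
        have := hT (p+2) hc
        simp only [show p + 2 - 1 = p + 1 by omega] at this
        exact this.1 hp1
      · rw [mkFrom]
        unfold slotOf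
        rw [if_neg hp]
        split_ifs with h
        · exact Good.z _ (ih (m+1) (by omega) (p+1) hp1)
        · exact Good.c _ (ih (m+1) (by omega) (p+1) hp1)

lemma spec_mkFrom (k : ℕ) (hTsub : T ⊆ Finset.Icc 1 k) (hT : ∀ i ∈ T, i - 1 ∉ T ∧ i - 1 ∉ Z)
    (hTZ : ∀ i ∈ T, i ∉ Z) :
    ∀ (n p : ℕ), 1 ≤ p → p + n = k + 1 → p ∉ T →
    Spec (mkFrom T Z (fun i => if i ∈ Z ∪ T.image (· - 1) then 1 else 0) p n) := by
  set I : ℕ → ℕ := fun i => if i ∈ Z ∪ T.image (· - 1) then 1 else 0 with hI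
  have hIone : ∀ i, i ∈ Z ∪ T.image (· - 1) → I i = 1 := fun i h => by rw [hI]; simp [h]
  have hIzero : ∀ i, i ∉ Z ∪ T.image (· - 1) → I i = 0 := fun i h => by rw [hI]; simp [h]
  have hmem : ∀ i, i ∈ T.image (· - 1) ↔ ∃ j ∈ T, j - 1 = i := by
    intro i
    simp [Finset.mem_image]
  intro n
  induction n using Nat.strong_induction_on with
  | _ n ih =>
    intro p hp hpk hpT
    match n with
    | 0 => exact Spec.nil
    | 1 =>
      rw [mkFrom, mkFrom]
      unfold slotOf
      rw [if_neg hpT]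
      by_cases h : p ∈ Z
      · rw [if_pos h, hIone p (Finset.mem_union_left _ h)]
        exact Spec.z Spec.nil
      · rw [if_neg h, hIzero p ?_]
        · exact Spec.c Spec.nil
        · intro hmem2
          rcases Finset.mem_union.mp hmem2 with h2 | h2
          · exact h h2
          · rcases (hmem p).mp h2 with ⟨j, hj, hj2⟩
            have hj1 : 1 ≤ j := by
              have := hTsub hj
              simp only [Finset.mem_Icc] at this
              omega
            have : j = p + 1 := by omega
            subst this
            have := hTsub hj
            simp only [Finset.mem_Icc] at this
            omega
    | (m + 2) =>
      by_cases hp1 : (p + 1) ∈ T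
      · have hpc := hT (p+1) hp1
        simp only [Nat.add_sub_cancel] at hpc
        rw [mkFrom, mkFrom]
        unfold slotOf
        rw [if_neg hpT, if_neg hpc.2, if_pos hp1]
        rw [hIone p (Finset.mem_union_right _ ((hmem p).mpr ⟨p+1, hp1, by omega⟩))]
        rw [hIzero (p+1) ?_]
        · refine Spec.ct (ih m (by omega) (p+2) (by omega) (by omega) ?_)
          intro hc
          have := hT (p+2) hc
          simp only [show p + 2 - 1 = p + 1 by omega] at this
          exact this.1 hp1
        · intro hmem2
          rcases Finset.mem_union.mp hmem2 with h2 | h2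
          · exact hTZ (p+1) hp1 h2
          · rcases (hmem (p+1)).mp h2 with ⟨j, hj, hj2⟩
            have hj1 : 1 ≤ j := by
              have := hTsub hj
              simp only [Finset.mem_Icc] at this
              omega
            have : j = p + 2 := by omega
            subst this
            exact (hT (p+2) hj).1 (by simpa using hp1)
      · rw [mkFrom]
        unfold slotOf
        rw [if_neg hpT]
        by_cases h : p ∈ Z
        · rw [if_pos h, hIone p (Finset.mem_union_left _ h)]
          exact Spec.z (ih (m+1) (by omega) (p+1) (by omega) (by omega) hp1)
        · rw [if_neg h, hIzero p ?_]
          · exact Spec.c (ih (m+1) (by omega) (p+1) (by omega) (by omega) hp1)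
          · intro hmem2
            rcases Finset.mem_union.mp hmem2 with h2 | h2
            · exact h h2
            · rcases (hmem p).mp h2 with ⟨j, hj, hj2⟩
              have hj1 : 1 ≤ j := by
                have := hTsub hj
                simp only [Finset.mem_Icc] at this
                omega
              have : j = p + 1 := by omega
              subst this
              exact hp1 hj

lemma matches_ofFn (W : ℕ → ℕ → ℕ) :
    ∀ (n p : ℕ),
    (∀ j, p ≤ j → j < p + n → ∀ c ≤ j, (W j c % 2 = 1 ↔ allow (slotOf T Z I j) c)) →
    Matches (List.ofFn (fun i : Fin n => W (p + i.1))) (mkFrom T Z I p n) p := by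
  intro n
  induction n with
  | zero =>
    intro p h
    rw [List.ofFn_zero, mkFrom]
    trivial
  | succ n ih =>
    intro p h
    rw [List.ofFn_succ, mkFrom]
    refine ⟨?_, ?_⟩
    · intro c hc
      simpa using h p le_rfl (by omega) c hc
    · have hfe : (fun i : Fin n => W (p + ((i.succ : Fin (n+1))).1)) =
          (fun i : Fin n => W ((p + 1) + i.1)) := by
        funext i
        simp only [Fin.val_succ]
        exact congrArg W (by omega)
      rw [hfe]
      exact ih (p+1) (fun j h1 h2 c hc => h j (by omega) (by omega) c hc)

end Trans

def wfun (a I : ℕ → ℕ) (k : ℕ) : Fin k → ℕ → ℕ := fun i c =>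
  if I (i.1 + 1) ≤ c then (a (i.1 + 1) + (c - I (i.1 + 1)) - 2).choose (c - I (i.1 + 1)) else 0

lemma even_of_cast {n : ℕ} (h : (n : ZMod 2) = 0) : Even n := by
  rcases Nat.even_or_odd n with he | ho
  · exact he
  · exfalso
    have h1 : n % 2 = 1 := Nat.odd_iff.mp ho
    have h2 : ((n % 2 : ℕ) : ZMod 2) = ((n : ℕ) : ZMod 2) := ZMod.natCast_mod n 2
    rw [h1, h] at h2
    exact absurd h2 (by decide)

lemma odd_of_cast {n : ℕ} (h : (n : ZMod 2) = 1) : Odd n := by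
  rcases Nat.even_or_odd n with he | ho
  · exfalso
    have h1 : n % 2 = 0 := Nat.even_iff.mp he
    have h2 : ((n % 2 : ℕ) : ZMod 2) = ((n : ℕ) : ZMod 2) := ZMod.natCast_mod n 2
    rw [h1, h] at h2
    exact absurd h2 (by decide)
  · exact ho

end Paper

namespace Paper

lemma Phi_eq_FS (k : ℕ) (a I : ℕ → ℕ) : Phi k a I = FS k (k+1) 0 (wfun a I k) := by
  unfold Phi FS
  have hstep : ∀ B : Fin k → ℕ, (cond k 0 B ∧ ∀ i : Fin k, I (i.1 + 1) ≤ B i) → cond k 0 B :=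
    fun B h => h.1
  -- restrict RHS to the subset where I ≤ B pointwise
  rw [← Finset.sum_subset
    (show (Fintype.piFinset fun _ : Fin k => Finset.range (k + 1)).filter
        (fun B => cond k 0 B ∧ ∀ i : Fin k, I (i.1 + 1) ≤ B i) ⊆
      (Fintype.piFinset fun _ : Fin k => Finset.range (k + 1)).filter (cond k 0) by
        intro B hB
        simp only [Finset.mem_filter] at hB ⊢
        exact ⟨hB.1, hB.2.1⟩) ?hz]
  case hz =>
    intro B hB hB2
    simp only [Finset.mem_filter] at hB hB2
    have : ¬ (∀ i : Fin k, I (i.1 + 1) ≤ B i) := by tauto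
    push_neg at this
    obtain ⟨i, hi⟩ := this
    apply Finset.prod_eq_zero (Finset.mem_univ i)
    unfold wfun
    rw [if_neg (by omega)]
  -- now a bijection with the Phi-side sum
  have cond_of : ∀ {B : Fin k → ℕ},
      (∀ j : Fin k, (∑ i ∈ Finset.univ.filter (fun i : Fin k => i ≤ j), B i) ≤ 0 + j.1 + 1) →
      ((∑ i : Fin k, B i) = 0 + k) → cond k 0 B := fun h1 h2 => ⟨h1, h2⟩
  apply Finset.sum_nbij' (i := fun B => (fun i : Fin k => B i + I (i.1 + 1)))
    (j := fun C => (fun i : Fin k => C i - I (i.1 + 1)))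
  · intro B hB
    simp only [Finset.mem_filter, Fintype.mem_piFinset, Finset.mem_range] at hB ⊢
    obtain ⟨hpi, hcond1, hcond2⟩ := hB
    have hcc : cond k 0 (fun i : Fin k => B i + I (i.1 + 1)) := by
      refine cond_of (fun j => ?_) ?_
      · have := hcond1 j
        omega
      · omega
    refine ⟨?_, hcc, fun i => ?_⟩
    · intro i
      show B i + I (i.1 + 1) < k + 1
      have h1 : B i + I (i.1 + 1) ≤ ∑ i : Fin k, (B i + I (i.1 + 1)) :=
        Finset.single_le_sum (f := fun i => B i + I (i.1+1))
          (fun _ _ => Nat.zero_le _) (Finset.mem_univ i)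
      omega
    · show I (i.1 + 1) ≤ B i + I (i.1 + 1)
      omega
  · intro C hC
    simp only [Finset.mem_filter, Fintype.mem_piFinset, Finset.mem_range] at hC ⊢
    obtain ⟨hpi, hcond, hle⟩ := hC
    have hcond1 := hcond.1
    have hcond2 := hcond.2
    have hsums : ∀ j : Fin k,
        (∑ i ∈ Finset.univ.filter (fun i : Fin k => i ≤ j), (C i - I (i.1 + 1) + I (i.1 + 1)))
        = ∑ i ∈ Finset.univ.filter (fun i : Fin k => i ≤ j), C i := by
      intro j
      apply Finset.sum_congr rfl
      intro i hi
      have := hle i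
      omega
    have htot : (∑ i : Fin k, (C i - I (i.1 + 1) + I (i.1 + 1))) = ∑ i : Fin k, C i := by
      apply Finset.sum_congr rfl
      intro i hi
      have := hle i
      omega
    have h1 : ∀ j : Fin k,
        (∑ i ∈ Finset.univ.filter (fun i : Fin k => i ≤ j), (C i - I (i.1 + 1) + I (i.1 + 1)))
          ≤ j.1 + 1 := by
      intro j
      rw [hsums j]
      have := hcond1 j
      omega
    have h2 : (∑ i : Fin k, (C i - I (i.1 + 1) + I (i.1 + 1))) = k := by
      rw [htot]
      omega
    exact ⟨fun i => by show C i - I (i.1+1) < k + 1; have := hpi i; omega, h1, h2⟩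
  · intro B hB
    funext i
    show B i + I (i.1 + 1) - I (i.1 + 1) = B i
    omega
  · intro C hC
    simp only [Finset.mem_filter] at hC
    funext i
    have := hC.2.2 i
    show C i - I (i.1 + 1) + I (i.1 + 1) = C i
    omega
  · intro B hB
    apply Finset.prod_congr rfl
    intro i _
    show Nat.choose (a (i.1+1) + B i - 2) (B i) = wfun a I k i (B i + I (i.1 + 1))
    unfold wfun
    rw [if_pos (by omega : I (i.1+1) ≤ B i + I (i.1+1))]
    congr 1 <;> omega

end Paper

/-- Theorem 4.8 (thm02): with disjoint `T, Z ⊆ {1,…,k}`, `C = {1,…,k} ∖ (T ∪ Z)`,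
each `i ∈ T` having `i ≥ 2` and `i - 1 ∈ C`, and `a_i ≡ 2, 1, 0 (mod 2^{⌊log₂(2i)⌋})`
according as `i ∈ T`, `i ∈ Z`, `i ∈ C`: setting `r = |T| + |Z|` and
`T′ = {i-1 : i ∈ T}`, `Φ(a, I)` is even for every 0/1-vector `I` with fewer than
`r` ones, while `Φ(a, χ_{Z ∪ T′})` is odd. -/
theorem stmt_13 (k r : ℕ) (hk : 1 ≤ k)
    (T Z C : Finset ℕ) (hTU : T ⊆ Finset.Icc 1 k) (hZU : Z ⊆ Finset.Icc 1 k)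
    (hdisj : Disjoint T Z) (hC : C = Finset.Icc 1 k \ (T ∪ Z))
    (hpred : ∀ i ∈ T, 2 ≤ i ∧ i - 1 ∈ C)
    (a : ℕ → ℕ) (ha : ∀ i ∈ Finset.Icc 1 k, 0 < a i)
    (haT : ∀ i ∈ T, a i ≡ 2 [MOD 2 ^ Nat.log 2 (2 * i)])
    (haZ : ∀ i ∈ Z, a i ≡ 1 [MOD 2 ^ Nat.log 2 (2 * i)])
    (haC : ∀ i ∈ C, a i ≡ 0 [MOD 2 ^ Nat.log 2 (2 * i)])
    (hr : r = T.card + Z.card) :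
    (∀ I : ℕ → ℕ, (∀ i ∈ Finset.Icc 1 k, I i ≤ 1) →
      (∑ i ∈ Finset.Icc 1 k, I i) < r → Even (Phi k a I)) ∧
    Odd (Phi k a (fun i => if i ∈ Z ∪ T.image (· - 1) then 1 else 0)) := by
  classical
  have hT' : ∀ i ∈ T, i - 1 ∉ T ∧ i - 1 ∉ Z := by
    intro i hi
    have h2 := (hpred i hi).2
    rw [hC, Finset.mem_sdiff, Finset.mem_union] at h2
    tauto
  have h1T : 1 ∉ T := fun h => by have := (hpred 1 h).1; omega
  have main : ∀ I : ℕ → ℕ,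
      (Phi k a I : ZMod 2) = (Paper.N (Paper.mkFrom T Z I 1 k) 0 : ZMod 2) := by
    intro I
    rw [Paper.Phi_eq_FS, Paper.FS_eq_G k (k+1) 0 _ (by omega)]
    have hw : ∀ j, 1 ≤ j → j < 1 + k → ∀ c ≤ j,
        (((fun j c => if I j ≤ c then (a j + (c - I j) - 2).choose (c - I j) else 0) j c) % 2 = 1
          ↔ Paper.allow (Paper.slotOf T Z I j) c) := by
      intro j hj1 hj2 c hc
      have hjk : j ∈ Finset.Icc 1 k := by simp only [Finset.mem_Icc]; omega
      unfold Paper.slotOf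
      by_cases hTm : j ∈ T
      · rw [if_pos hTm]
        have h2j := (hpred j hTm).1
        by_cases hIc : I j ≤ c
        · show (if I j ≤ c then (a j + (c - I j) - 2).choose (c - I j) else 0) % 2 = 1 ↔ _
          rw [if_pos hIc, Paper.odd_weight_T h2j (haT j hTm) (c - I j) (by omega)]
          simp [Paper.allow, hIc]
        · show (if I j ≤ c then (a j + (c - I j) - 2).choose (c - I j) else 0) % 2 = 1 ↔ _
          rw [if_neg hIc]
          simp [Paper.allow, hIc]
      · by_cases hZm : j ∈ Z
        · rw [if_neg hTm, if_pos hZm]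
          show (if I j ≤ c then (a j + (c - I j) - 2).choose (c - I j) else 0) % 2 = 1 ↔ _
          by_cases hIc : I j ≤ c
          · rw [if_pos hIc, Paper.odd_weight_Z (by omega) (haZ j hZm) (ha j hjk) (c - I j) (by omega)]
            simp only [Paper.allow]
            split_ifs with h0 <;> simp <;> omega
          · rw [if_neg hIc]
            simp only [Paper.allow]
            simp
            omega
        · rw [if_neg hTm, if_neg hZm]
          have hjC : j ∈ C := by
            rw [hC, Finset.mem_sdiff, Finset.mem_union]
            tauto
          show (if I j ≤ c then (a j + (c - I j) - 2).choose (c - I j) else 0) % 2 = 1 ↔ _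
          by_cases hIc : I j ≤ c
          · rw [if_pos hIc, Paper.odd_weight_C (by omega) (haC j hjC) (ha j hjk) (c - I j) (by omega)]
            simp only [Paper.allow]
            split_ifs with h0 <;> simp <;> omega
          · rw [if_neg hIc]
            simp only [Paper.allow]
            simp
            omega
    have h0 := Paper.matches_ofFn T Z I
      (fun j c => if I j ≤ c then (a j + (c - I j) - 2).choose (c - I j) else 0) k 1 hw
    have he : (fun i : Fin k => (fun j => fun c =>
        if I j ≤ c then (a j + (c - I j) - 2).choose (c - I j) else 0) (1 + i.1))
        = Paper.wfun a I k := by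
      funext i c
      show (if I (1 + i.1) ≤ c then (a (1 + i.1) + (c - I (1 + i.1)) - 2).choose (c - I (1 + i.1))
        else 0) = _
      rw [show 1 + i.1 = i.1 + 1 by omega]
      rfl
    rw [congrArg List.ofFn he] at h0
    exact Paper.G_parity _ _ 1 0 h0 le_rfl
  constructor
  · intro I hIle hIlt
    apply Paper.even_of_cast
    rw [main I]
    have hGood : Paper.Good (Paper.mkFrom T Z I 1 k) := Paper.good_mkFrom T Z I hT' k 1 h1T
    have heps : Paper.epsSum (Paper.mkFrom T Z I 1 k) = ∑ i ∈ Finset.Icc 1 k, I i := by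
      rw [Paper.epsSum_mkFrom T Z I k 1, show 1 + k = k + 1 by omega, Finset.Ico_add_one_right_eq_Icc]
    have hrk : Paper.rk (Paper.mkFrom T Z I 1 k) = r := by
      rw [Paper.rk_mkFrom T Z I k 1, show 1 + k = k + 1 by omega, Finset.Ico_add_one_right_eq_Icc,
        Finset.sum_boole]
      rw [show (Finset.Icc 1 k).filter (fun i => i ∈ T ∨ i ∈ Z) = T ∪ Z from Finset.ext fun i => by
        simp only [Finset.mem_filter, Finset.mem_union]
        constructor
        · rintro ⟨h1, h2⟩; exact h2
        · intro h2
          refine ⟨?_, h2⟩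
          rcases h2 with h2 | h2
          · exact hTU h2
          · exact hZU h2]
      rw [Finset.card_union_of_disjoint hdisj, hr]
      simp
    exact Paper.evenN hGood 0 (by omega)
  · apply Paper.odd_of_cast
    rw [main _]
    have hSpec : Paper.Spec (Paper.mkFrom T Z
        (fun i => if i ∈ Z ∪ T.image (· - 1) then 1 else 0) 1 k) :=
      Paper.spec_mkFrom T Z k hTU hT' (fun i hi => Finset.disjoint_left.mp hdisj hi)
        k 1 le_rfl (by omega) h1T
    rw [Paper.oddN hSpec 0]
    simp
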